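/- A hyperbolic-harmonic function f : B^n → C belongs to the h-harmonic Bloch space (i.e. ‖f‖_HB = sup_{z∈B^n} (1−|z|²)(|∇̂f(z)| + |∇̂f̄(z)|) < ∞) if and only if sup_{z,w∈B^n, z≠w} L_f(z, w) < ∞, where L_f(z, w) = (1−|z|²)^{1/2}(1−|w|²)^{1/2}|f(z) − f(w)|/|z − w|. -/

import Mathlib

open MeasureTheory Metric Complex

noncomputable section

/-- `ℂⁿ` with the Euclidean norm. -/
abbrev Cn (n : ℕ) := EuclideanSpace ℂ (Fin n)

/-- The Wirtinger derivative `∂f/∂z_k = (∂f/∂x_k - i ∂f/∂y_k)/2`. -/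
noncomputable def wdz (n : ℕ) (f : Cn n → ℂ) (z : Cn n) (k : Fin n) : ℂ :=
  (1 / 2 : ℂ) *
    (fderiv ℝ f z (EuclideanSpace.single k 1) -
      Complex.I * fderiv ℝ f z (EuclideanSpace.single k Complex.I))

/-- The Wirtinger derivative `∂f/∂z̄_k = (∂f/∂x_k + i ∂f/∂y_k)/2`. -/
noncomputable def wdzbar (n : ℕ) (f : Cn n → ℂ) (z : Cn n) (k : Fin n) : ℂ :=
  (1 / 2 : ℂ) *
    (fderiv ℝ f z (EuclideanSpace.single k 1) +
      Complex.I * fderiv ℝ f z (EuclideanSpace.single k Complex.I))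

/-- Euclidean norm of a vector of complex numbers. -/
noncomputable def euclNorm (n : ℕ) (v : Fin n → ℂ) : ℝ :=
  Real.sqrt (∑ k, Complex.normSq (v k))

/-- The Laplace–Beltrami operator
`Δ_h u = (1-|z|²)² Σ_k (u_{x_k x_k} + u_{y_k y_k})
  + 4(n-1)(1-|z|²) Σ_k (x_k u_{x_k} + y_k u_{y_k})`. -/
noncomputable def laplaceH (n : ℕ) (u : Cn n → ℝ) (z : Cn n) : ℝ :=
  (1 - ‖z‖ ^ 2) ^ 2 *
      ∑ k, (fderiv ℝ (fun w => fderiv ℝ u w (EuclideanSpace.single k 1)) z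
              (EuclideanSpace.single k 1) +
            fderiv ℝ (fun w => fderiv ℝ u w (EuclideanSpace.single k Complex.I)) z
              (EuclideanSpace.single k Complex.I)) +
    4 * ((n : ℝ) - 1) * (1 - ‖z‖ ^ 2) *
      ∑ k, ((z k).re * fderiv ℝ u z (EuclideanSpace.single k 1) +
            (z k).im * fderiv ℝ u z (EuclideanSpace.single k Complex.I))

/-- A complex-valued function on the unit ball of `ℂⁿ` is hyperbolic-harmonic if it is
twice continuously differentiable there and its real and imaginary parts are annihilated
by the Laplace–Beltrami operator. -/
def IsHHarmonic (n : ℕ) (f : Cn n → ℂ) : Prop :=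
  ContDiffOn ℝ 2 f (ball 0 1) ∧
    ∀ z ∈ ball (0 : Cn n) 1,
      laplaceH n (fun w => (f w).re) z = 0 ∧ laplaceH n (fun w => (f w).im) z = 0
/-- `(1−|z|²)(|∇̂f(z)| + |∇̂f̄(z)|)`, the quantity whose supremum is the Bloch norm. -/
noncomputable def hbExpr (n : ℕ) (f : Cn n → ℂ) (z : Cn n) : ℝ :=
  (1 - ‖z‖ ^ 2) * (euclNorm n (wdz n f z) + euclNorm n (wdzbar n f z))

/-- The `h`-harmonic Bloch "norm" `‖f‖_HB = sup_{z ∈ Bⁿ} (1−|z|²)(|∇̂f(z)| + |∇̂f̄(z)|)`. -/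
noncomputable def hbNorm (n : ℕ) (f : Cn n → ℂ) : ℝ :=
  ⨆ z : ball (0 : Cn n) 1, hbExpr n f z

/-- The weighted Lipschitz function
`L_f(z,w) = (1−|z|²)^{1/2}(1−|w|²)^{1/2}|f(z) − f(w)|/|z − w|`. -/
noncomputable def weightedLip (n : ℕ) (f : Cn n → ℂ) (z w : Cn n) : ℝ :=
  Real.sqrt (1 - ‖z‖ ^ 2) * Real.sqrt (1 - ‖w‖ ^ 2) * ‖f z - f w‖ / ‖z - w‖
open Topology Filter
set_option maxHeartbeats 1000000
open MeasureTheory Metric Complex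

lemma cn_sum_single {n : ℕ} (v : Cn n) :
    v = ∑ k, ((v k).re • EuclideanSpace.single k (1:ℂ) +
      (v k).im • EuclideanSpace.single k Complex.I) := by
  ext j
  rw [WithLp.ofLp_sum, Finset.sum_apply]
  rw [Finset.sum_eq_single j]
  · simp [EuclideanSpace.single_apply, Complex.real_smul, Complex.re_add_im]
  · intro b _ hb
    simp [EuclideanSpace.single_apply, if_neg (Ne.symm hb)]
  · simp

lemma fderiv_apply_eq {n : ℕ} (f : Cn n → ℂ) (z : Cn n) (v : Cn n) :
    fderiv ℝ f z v = ∑ k, (wdz n f z k * v k +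
      wdzbar n f z k * (starRingEnd ℂ) (v k)) := by
  conv_lhs => rw [cn_sum_single v]
  rw [map_sum]
  refine Finset.sum_congr rfl fun k _ => ?_
  rw [map_add, _root_.map_smul, _root_.map_smul]
  set p := fderiv ℝ f z (EuclideanSpace.single k (1:ℂ))
  set q := fderiv ℝ f z (EuclideanSpace.single k (Complex.I))
  set x := (v k).re with hx
  set y := (v k).im with hy
  have hv : (v k) = (x : ℂ) + (y : ℂ) * Complex.I := by
    rw [hx, hy]; exact (Complex.re_add_im (v k)).symm
  have hcv : (starRingEnd ℂ) (v k) = (x : ℂ) - (y : ℂ) * Complex.I := by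
    rw [hv]; simp [Complex.ext_iff]
  rw [wdz, wdzbar, hcv, hv]
  simp only [Complex.real_smul]
  linear_combination (q * (y : ℂ)) * Complex.I_sq
lemma euclNorm_eq_norm {n : ℕ} (A : Fin n → ℂ) :
    euclNorm n A = ‖(show Cn n from WithLp.toLp 2 A)‖ := by
  rw [EuclideanSpace.norm_eq, euclNorm]
  congr 1
  refine Finset.sum_congr rfl fun k _ => ?_
  rw [Complex.normSq_eq_norm_sq]

lemma euclNorm_nonneg {n : ℕ} (A : Fin n → ℂ) : 0 ≤ euclNorm n A :=
  Real.sqrt_nonneg _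

lemma norm_sum_mul_le {n : ℕ} (A : Fin n → ℂ) (v : Cn n) :
    ‖∑ k, A k * v k‖ ≤ euclNorm n A * ‖v‖ := by
  set x : Cn n := WithLp.toLp 2 (fun k => (starRingEnd ℂ) (A k)) with hx
  have h1 : ∑ k, A k * v k = inner ℂ x v := by
    rw [PiLp.inner_apply]
    refine Finset.sum_congr rfl fun k _ => ?_
    simp [hx, RCLike.inner_apply, mul_comm]
  have h2 : ‖x‖ = euclNorm n A := by
    rw [euclNorm_eq_norm, EuclideanSpace.norm_eq, EuclideanSpace.norm_eq]
    congr 1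
    refine Finset.sum_congr rfl fun k _ => ?_
    simp [hx]
  rw [h1, ← h2]
  exact norm_inner_le_norm x v

lemma norm_conj_cn {n : ℕ} (v : Cn n) :
    ‖(show Cn n from WithLp.toLp 2 fun k => (starRingEnd ℂ) (v k))‖ = ‖v‖ := by
  rw [EuclideanSpace.norm_eq, EuclideanSpace.norm_eq]
  congr 1
  refine Finset.sum_congr rfl fun k _ => ?_
  simp

lemma norm_fderiv_apply_le {n : ℕ} (f : Cn n → ℂ) (z : Cn n) (v : Cn n) :
    ‖fderiv ℝ f z v‖ ≤ (euclNorm n (wdz n f z) + euclNorm n (wdzbar n f z)) * ‖v‖ := by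
  rw [fderiv_apply_eq]
  calc ‖∑ k, (wdz n f z k * v k + wdzbar n f z k * (starRingEnd ℂ) (v k))‖
      = ‖(∑ k, wdz n f z k * v k) + ∑ k, wdzbar n f z k * (starRingEnd ℂ) (v k)‖ := by
        rw [Finset.sum_add_distrib]
    _ ≤ ‖∑ k, wdz n f z k * v k‖ + ‖∑ k, wdzbar n f z k * (starRingEnd ℂ) (v k)‖ :=
        norm_add_le _ _
    _ ≤ euclNorm n (wdz n f z) * ‖v‖ + euclNorm n (wdzbar n f z) * ‖v‖ := by
        gcongr
        · exact norm_sum_mul_le _ v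
        · calc ‖∑ k, wdzbar n f z k * (starRingEnd ℂ) (v k)‖
              ≤ euclNorm n (wdzbar n f z) *
                  ‖(show Cn n from WithLp.toLp 2 fun k => (starRingEnd ℂ) (v k))‖ :=
                norm_sum_mul_le _ (WithLp.toLp 2 fun k => (starRingEnd ℂ) (v k))
            _ = euclNorm n (wdzbar n f z) * ‖v‖ := by rw [norm_conj_cn]
    _ = (euclNorm n (wdz n f z) + euclNorm n (wdzbar n f z)) * ‖v‖ := by ring
lemma sum_wdz_eq {n : ℕ} (f : Cn n → ℂ) (z : Cn n) (v : Cn n) :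
    (∑ k, wdz n f z k * v k) =
      (fderiv ℝ f z v - Complex.I * fderiv ℝ f z (Complex.I • v)) / 2 ∧
    (∑ k, wdzbar n f z k * (starRingEnd ℂ) (v k)) =
      (fderiv ℝ f z v + Complex.I * fderiv ℝ f z (Complex.I • v)) / 2 := by
  have e1 := fderiv_apply_eq f z v
  have e2 := fderiv_apply_eq f z (Complex.I • v)
  have e2' : fderiv ℝ f z (Complex.I • v) =
      Complex.I * (∑ k, wdz n f z k * v k) -
        Complex.I * (∑ k, wdzbar n f z k * (starRingEnd ℂ) (v k)) := by
    rw [e2, Finset.mul_sum, Finset.mul_sum, ← Finset.sum_sub_distrib]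
    refine Finset.sum_congr rfl fun k _ => ?_
    have hsc : (Complex.I • v) k = Complex.I * v k := rfl
    rw [hsc, map_mul, Complex.conj_I]
    ring
  rw [Finset.sum_add_distrib] at e1
  constructor
  · rw [e1, e2']
    linear_combination (((∑ k, wdz n f z k * v k) -
      (∑ k, wdzbar n f z k * (starRingEnd ℂ) (v k))) / 2) * Complex.I_sq
  · rw [e1, e2']
    linear_combination ((-(∑ k, wdz n f z k * v k) +
      (∑ k, wdzbar n f z k * (starRingEnd ℂ) (v k))) / 2) * Complex.I_sq

lemma euclNorm_add_le_of_fderiv_le {n : ℕ} (f : Cn n → ℂ) (z : Cn n) (K : ℝ)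
    (hK0 : 0 ≤ K) (hK : ∀ v : Cn n, ‖fderiv ℝ f z v‖ ≤ K * ‖v‖) :
    euclNorm n (wdz n f z) + euclNorm n (wdzbar n f z) ≤ 2 * K := by
  have key : ∀ v : Cn n, ‖∑ k, wdz n f z k * v k‖ ≤ K * ‖v‖ ∧
      ‖∑ k, wdzbar n f z k * (starRingEnd ℂ) (v k)‖ ≤ K * ‖v‖ := by
    intro v
    obtain ⟨hA, hB⟩ := sum_wdz_eq f z v
    have hIv : ‖fderiv ℝ f z (Complex.I • v)‖ ≤ K * ‖v‖ := by
      have := hK (Complex.I • v)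
      rwa [norm_smul, Complex.norm_I, one_mul] at this
    constructor
    · rw [hA]
      calc ‖(fderiv ℝ f z v - Complex.I * fderiv ℝ f z (Complex.I • v)) / 2‖
          = ‖fderiv ℝ f z v - Complex.I * fderiv ℝ f z (Complex.I • v)‖ / 2 := by
            rw [norm_div]; norm_num
        _ ≤ (‖fderiv ℝ f z v‖ + ‖fderiv ℝ f z (Complex.I • v)‖) / 2 := by
            gcongr
            calc ‖fderiv ℝ f z v - Complex.I * fderiv ℝ f z (Complex.I • v)‖
                ≤ ‖fderiv ℝ f z v‖ + ‖Complex.I * fderiv ℝ f z (Complex.I • v)‖ :=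
                  norm_sub_le _ _
              _ = ‖fderiv ℝ f z v‖ + ‖fderiv ℝ f z (Complex.I • v)‖ := by
                  rw [norm_mul, Complex.norm_I, one_mul]
        _ ≤ (K * ‖v‖ + K * ‖v‖) / 2 := by linarith [hK v, hIv]
        _ = K * ‖v‖ := by ring
    · rw [hB]
      calc ‖(fderiv ℝ f z v + Complex.I * fderiv ℝ f z (Complex.I • v)) / 2‖
          = ‖fderiv ℝ f z v + Complex.I * fderiv ℝ f z (Complex.I • v)‖ / 2 := by
            rw [norm_div]; norm_num
        _ ≤ (‖fderiv ℝ f z v‖ + ‖fderiv ℝ f z (Complex.I • v)‖) / 2 := by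
            gcongr
            calc ‖fderiv ℝ f z v + Complex.I * fderiv ℝ f z (Complex.I • v)‖
                ≤ ‖fderiv ℝ f z v‖ + ‖Complex.I * fderiv ℝ f z (Complex.I • v)‖ :=
                  norm_add_le _ _
              _ = ‖fderiv ℝ f z v‖ + ‖fderiv ℝ f z (Complex.I • v)‖ := by
                  rw [norm_mul, Complex.norm_I, one_mul]
        _ ≤ (K * ‖v‖ + K * ‖v‖) / 2 := by linarith [hK v, hIv]
        _ = K * ‖v‖ := by ring
  have hAle : euclNorm n (wdz n f z) ≤ K := by
    set vA : Cn n := WithLp.toLp 2 (fun k => (starRingEnd ℂ) (wdz n f z k)) with hvA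
    have hSA : (∑ k, wdz n f z k * vA k) = ((euclNorm n (wdz n f z)) ^ 2 : ℝ) := by
      rw [euclNorm, Real.sq_sqrt (Finset.sum_nonneg fun k _ => Complex.normSq_nonneg _)]
      push_cast
      refine Finset.sum_congr rfl fun k _ => ?_
      rw [hvA]
      exact Complex.mul_conj _
    have hnvA : ‖vA‖ = euclNorm n (wdz n f z) := by
      rw [hvA, euclNorm_eq_norm]
      exact norm_conj_cn (WithLp.toLp 2 (wdz n f z))
    have := (key vA).1
    rw [hSA, hnvA, Complex.norm_real, Real.norm_eq_abs, _root_.abs_of_nonneg (by positivity)] at this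
    nlinarith [euclNorm_nonneg (wdz n f z), hK0]
  have hBle : euclNorm n (wdzbar n f z) ≤ K := by
    set vB : Cn n := WithLp.toLp 2 (fun k => wdzbar n f z k) with hvB
    have hSB : (∑ k, wdzbar n f z k * (starRingEnd ℂ) (vB k)) =
        ((euclNorm n (wdzbar n f z)) ^ 2 : ℝ) := by
      rw [euclNorm, Real.sq_sqrt (Finset.sum_nonneg fun k _ => Complex.normSq_nonneg _)]
      push_cast
      refine Finset.sum_congr rfl fun k _ => ?_
      exact Complex.mul_conj _
    have hnvB : ‖vB‖ = euclNorm n (wdzbar n f z) := by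
      rw [hvB, euclNorm_eq_norm]
    have := (key vB).2
    rw [hSB, hnvB, Complex.norm_real, Real.norm_eq_abs, _root_.abs_of_nonneg (by positivity)] at this
    nlinarith [euclNorm_nonneg (wdzbar n f z), hK0]
  linarith
lemma sqrt_log_ineq {a b : ℝ} (ha : 0 < a) (hab : a < b) :
    Real.log b - Real.log a ≤ (b - a) / (Real.sqrt a * Real.sqrt b) := by
  have hb : 0 < b := ha.trans hab
  set u := (Real.log b - Real.log a) / 2 with hu
  have hu0 : 0 < u := by
    have := Real.log_lt_log ha hab
    rw [hu]; linarith
  have hsb : Real.sqrt b = Real.exp (Real.log b / 2) := by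
    rw [Real.sqrt_eq_rpow, Real.rpow_def_of_pos hb]; ring_nf
  have hsa : Real.sqrt a = Real.exp (Real.log a / 2) := by
    rw [Real.sqrt_eq_rpow, Real.rpow_def_of_pos ha]; ring_nf
  have hsinh := (Real.self_le_sinh_iff.mpr hu0.le)
  rw [Real.sinh_eq] at hsinh
  have heb : Real.exp u = Real.sqrt b / Real.sqrt a := by
    rw [hsb, hsa, ← Real.exp_sub]; congr 1; rw [hu]; ring
  have hea : Real.exp (-u) = Real.sqrt a / Real.sqrt b := by
    rw [hsb, hsa, ← Real.exp_sub]; congr 1; rw [hu]; ring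
  rw [heb, hea] at hsinh
  have hsa0 : 0 < Real.sqrt a := Real.sqrt_pos.mpr ha
  have hsb0 : 0 < Real.sqrt b := Real.sqrt_pos.mpr hb
  have hb' : Real.sqrt b * Real.sqrt b = b := Real.mul_self_sqrt hb.le
  have ha' : Real.sqrt a * Real.sqrt a = a := Real.mul_self_sqrt ha.le
  have h3 : Real.sqrt b / Real.sqrt a - Real.sqrt a / Real.sqrt b
      = (b - a) / (Real.sqrt a * Real.sqrt b) := by
    rw [div_sub_div _ _ hsa0.ne' hsb0.ne', hb', ha']
  rw [hu, h3] at hsinh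
  linarith

lemma integral_inv_lin {a b : ℝ} (ha : 0 < a) (hb : 0 < b) :
    ∫ t in (0:ℝ)..1, ((1-t)*a + t*b)⁻¹ ≤ 1 / (Real.sqrt a * Real.sqrt b) := by
  have hlin : ∀ t : ℝ, t ∈ Set.uIcc (0:ℝ) 1 → 0 < (1-t)*a + t*b := by
    intro t ht
    rw [Set.uIcc_of_le (by norm_num)] at ht
    have hm : 0 < min a b := lt_min ha hb
    have h1 : 0 ≤ (1 - t) * (a - min a b) :=
      mul_nonneg (by linarith [ht.2]) (by linarith [min_le_left a b])
    have h2 : 0 ≤ t * (b - min a b) :=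
      mul_nonneg ht.1 (by linarith [min_le_right a b])
    nlinarith
  rcases eq_or_ne a b with rfl | hab
  · have : ∀ t : ℝ, ((1-t)*a + t*a)⁻¹ = a⁻¹ := fun t => by ring_nf
    simp_rw [this]
    rw [intervalIntegral.integral_const]
    have : Real.sqrt a * Real.sqrt a = a := Real.mul_self_sqrt ha.le
    rw [one_div, ← this]
    simp
  · have hba : b - a ≠ 0 := sub_ne_zero.mpr (Ne.symm hab)
    have hftc : ∀ t ∈ Set.uIcc (0:ℝ) 1,
        HasDerivAt (fun t => Real.log ((1-t)*a + t*b) / (b-a)) ((1-t)*a + t*b)⁻¹ t := by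
      intro t ht
      have h1 : HasDerivAt (fun t : ℝ => (1-t)*a + t*b) (b - a) t := by
        have : HasDerivAt (fun t : ℝ => (1-t)*a + t*b) (-1 * a + 1 * b) t := by
          exact (((hasDerivAt_id t).const_sub 1).mul_const a).add ((hasDerivAt_id t).mul_const b)
        simpa using this.congr_deriv (by ring)
      have h2 := (h1.log (ne_of_gt (hlin t ht))).div_const (b - a)
      refine h2.congr_deriv ?_
      have hx := ne_of_gt (hlin t ht)
      field_simp
    have hInt : IntervalIntegrable (fun t => ((1-t)*a + t*b)⁻¹) MeasureTheory.volume 0 1 := by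
      apply ContinuousOn.intervalIntegrable
      apply ContinuousOn.inv₀
      · fun_prop
      · intro t ht; exact ne_of_gt (hlin t ht)
    have heval : (∫ t in (0:ℝ)..1, ((1-t)*a + t*b)⁻¹) = (Real.log b - Real.log a) / (b-a) := by
      rw [intervalIntegral.integral_eq_sub_of_hasDerivAt hftc hInt]
      show Real.log ((1-(1:ℝ))*a + 1*b)/(b-a) - Real.log ((1-(0:ℝ))*a + 0*b)/(b-a) = _
      rw [show (1-(1:ℝ))*a + 1*b = b by ring, show (1-(0:ℝ))*a + 0*b = a by ring,
        div_sub_div_same]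
    rw [heval]
    have hsa0 : 0 < Real.sqrt a := Real.sqrt_pos.mpr ha
    have hsb0 : 0 < Real.sqrt b := Real.sqrt_pos.mpr hb
    rcases lt_or_gt_of_ne hab with h | h
    · have key := sqrt_log_ineq ha h
      rw [le_div_iff₀ (by positivity)] at key
      rw [div_le_div_iff₀ (by linarith) (by positivity)]
      linarith
    · have key := sqrt_log_ineq hb h
      rw [le_div_iff₀ (by positivity)] at key
      have hflip : (Real.log b - Real.log a)/(b-a) = (Real.log a - Real.log b)/(a-b) := by
        rw [← neg_div_neg_eq]; ring_nf
      rw [hflip, div_le_div_iff₀ (by linarith) (by positivity)]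
      nlinarith [key]
lemma forward_lip {n : ℕ} (f : Cn n → ℂ) (hf2 : ContDiffOn ℝ 2 f (ball 0 1)) {C : ℝ}
    (hC : ∀ z ∈ ball (0 : Cn n) 1, hbExpr n f z ≤ C)
    {z w : Cn n} (hz : z ∈ ball (0:Cn n) 1) (hw : w ∈ ball (0:Cn n) 1) (hzw : z ≠ w) :
    weightedLip n f z w ≤ C := by
  have hC0 : 0 ≤ C := by
    refine le_trans ?_ (hC z hz)
    rw [hbExpr]
    have h1 : ‖z‖ < 1 := mem_ball_zero_iff.mp hz
    exact mul_nonneg (by nlinarith [norm_nonneg z])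
      (add_nonneg (euclNorm_nonneg _) (euclNorm_nonneg _))
  rw [mem_ball_zero_iff] at hz hw
  set a := 1 - ‖z‖^2 with hadef
  set b := 1 - ‖w‖^2 with hbdef
  have ha : 0 < a := by rw [hadef]; nlinarith [norm_nonneg z]
  have hb : 0 < b := by rw [hbdef]; nlinarith [norm_nonneg w]
  set γ : ℝ → Cn n := fun t => z + t • (w - z) with hγ
  have hlin : ∀ t ∈ Set.Icc (0:ℝ) 1, 0 < (1-t)*a + t*b := by
    intro t ht
    have hm : 0 < min a b := lt_min ha hb
    have h1 : 0 ≤ (1 - t) * (a - min a b) :=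
      mul_nonneg (by linarith [ht.2]) (by linarith [min_le_left a b])
    have h2 : 0 ≤ t * (b - min a b) :=
      mul_nonneg ht.1 (by linarith [min_le_right a b])
    nlinarith
  have hseg : ∀ t ∈ Set.Icc (0:ℝ) 1, (1-t)*a + t*b ≤ 1 - ‖γ t‖^2 := by
    intro t ht
    have h1 : γ t = (1-t) • z + t • w := by
      rw [hγ]; simp only [smul_sub, sub_smul, one_smul]; abel
    have h2 : ‖γ t‖ ≤ (1-t)*‖z‖ + t*‖w‖ := by
      rw [h1]
      refine (norm_add_le _ _).trans ?_
      rw [norm_smul, norm_smul, Real.norm_eq_abs, Real.norm_eq_abs,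
        _root_.abs_of_nonneg (by linarith [ht.2] : (0:ℝ) ≤ 1 - t), _root_.abs_of_nonneg ht.1]
    rw [hadef, hbdef]
    nlinarith [mul_self_le_mul_self (norm_nonneg (γ t)) h2,
      mul_nonneg (mul_nonneg ht.1 (by linarith [ht.2] : (0:ℝ) ≤ 1 - t))
        (sq_nonneg (‖z‖ - ‖w‖))]
  have hmem : ∀ t ∈ Set.Icc (0:ℝ) 1, γ t ∈ ball (0:Cn n) 1 := by
    intro t ht
    rw [mem_ball_zero_iff]
    nlinarith [hseg t ht, hlin t ht, norm_nonneg (γ t)]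
  have hder : ∀ t ∈ Set.uIcc (0:ℝ) 1,
      HasDerivAt (fun t => f (γ t)) (fderiv ℝ f (γ t) (w-z)) t := by
    intro t ht
    rw [Set.uIcc_of_le (by norm_num)] at ht
    have hγd : HasDerivAt γ (w - z) t := by
      have h := ((hasDerivAt_id t).smul_const (w - z)).const_add z
      rw [hγ]; simpa using h
    have hfd : DifferentiableAt ℝ f (γ t) :=
      (hf2.differentiableOn (by norm_num)).differentiableAt
        (isOpen_ball.mem_nhds (hmem t ht))
    exact hfd.hasFDerivAt.comp_hasDerivAt t hγd
  have hcont : ContinuousOn (fun t => fderiv ℝ f (γ t) (w-z)) (Set.uIcc (0:ℝ) 1) := by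
    have h1 : ContinuousOn (fderiv ℝ f) (ball (0:Cn n) 1) :=
      hf2.continuousOn_fderiv_of_isOpen isOpen_ball (by norm_num)
    have h2 : ContinuousOn γ (Set.uIcc (0:ℝ) 1) := by
      apply Continuous.continuousOn
      rw [hγ]; continuity
    refine (h1.comp h2 ?_).clm_apply continuousOn_const
    intro t ht
    rw [Set.uIcc_of_le (by norm_num)] at ht
    exact hmem t ht
  have hInt : IntervalIntegrable (fun t => fderiv ℝ f (γ t) (w-z))
      MeasureTheory.volume 0 1 := hcont.intervalIntegrable
  have heq : f w - f z = ∫ t in (0:ℝ)..1, fderiv ℝ f (γ t) (w-z) := by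
    rw [intervalIntegral.integral_eq_sub_of_hasDerivAt hder hInt]
    have e1 : γ 1 = w := by rw [hγ]; simp
    have e0 : γ 0 = z := by rw [hγ]; simp
    rw [e1, e0]
  have hptbound : ∀ t ∈ Set.Icc (0:ℝ) 1,
      ‖fderiv ℝ f (γ t) (w-z)‖ ≤ C * ‖w - z‖ * ((1-t)*a + t*b)⁻¹ := by
    intro t ht
    have h1 := norm_fderiv_apply_le f (γ t) (w - z)
    have hE := hC (γ t) (hmem t ht)
    rw [hbExpr] at hE
    have hL : 0 < 1 - ‖γ t‖^2 := lt_of_lt_of_le (hlin t ht) (hseg t ht)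
    have hsum : 0 ≤ euclNorm n (wdz n f (γ t)) + euclNorm n (wdzbar n f (γ t)) :=
      add_nonneg (euclNorm_nonneg _) (euclNorm_nonneg _)
    have h2 : euclNorm n (wdz n f (γ t)) + euclNorm n (wdzbar n f (γ t))
        ≤ C * ((1-t)*a + t*b)⁻¹ := by
      rw [← div_eq_mul_inv, le_div_iff₀ (hlin t ht)]
      have h3 := mul_le_mul_of_nonneg_left (hseg t ht) hsum
      linarith [hE, h3]
    calc ‖fderiv ℝ f (γ t) (w-z)‖
        ≤ (euclNorm n (wdz n f (γ t)) + euclNorm n (wdzbar n f (γ t))) * ‖w-z‖ := h1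
      _ ≤ (C * ((1-t)*a + t*b)⁻¹) * ‖w-z‖ :=
          mul_le_mul_of_nonneg_right h2 (norm_nonneg _)
      _ = C * ‖w-z‖ * ((1-t)*a + t*b)⁻¹ := by ring
  have hInt2 : IntervalIntegrable (fun t => C * ‖w - z‖ * ((1-t)*a + t*b)⁻¹)
      MeasureTheory.volume 0 1 := by
    apply ContinuousOn.intervalIntegrable
    apply ContinuousOn.mul continuousOn_const
    apply ContinuousOn.inv₀
    · fun_prop
    · intro t ht
      rw [Set.uIcc_of_le (by norm_num)] at ht
      exact ne_of_gt (hlin t ht)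
  have hnorm : ‖f w - f z‖ ≤ C * ‖w - z‖ * (1/(Real.sqrt a * Real.sqrt b)) := by
    rw [heq]
    calc ‖∫ t in (0:ℝ)..1, fderiv ℝ f (γ t) (w-z)‖
        ≤ ∫ t in (0:ℝ)..1, ‖fderiv ℝ f (γ t) (w-z)‖ :=
          intervalIntegral.norm_integral_le_integral_norm (by norm_num)
      _ ≤ ∫ t in (0:ℝ)..1, C * ‖w - z‖ * ((1-t)*a + t*b)⁻¹ :=
          intervalIntegral.integral_mono_on (by norm_num) hInt.norm hInt2 hptbound
      _ = C * ‖w - z‖ * ∫ t in (0:ℝ)..1, ((1-t)*a + t*b)⁻¹ := by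
          rw [← intervalIntegral.integral_const_mul]
      _ ≤ C * ‖w - z‖ * (1/(Real.sqrt a * Real.sqrt b)) := by
          exact mul_le_mul_of_nonneg_left (integral_inv_lin ha hb) (by positivity)
  rw [weightedLip, div_le_iff₀ (by
    rw [norm_sub_pos_iff]; exact hzw)]
  have habs : ‖f z - f w‖ = ‖f w - f z‖ := by
    rw [norm_sub_rev]
  rw [habs]
  have hsa0 : 0 < Real.sqrt a := Real.sqrt_pos.mpr ha
  have hsb0 : 0 < Real.sqrt b := Real.sqrt_pos.mpr hb
  calc Real.sqrt a * Real.sqrt b * ‖f w - f z‖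
      ≤ Real.sqrt a * Real.sqrt b * (C * ‖w - z‖ * (1/(Real.sqrt a * Real.sqrt b))) :=
        mul_le_mul_of_nonneg_left hnorm (by positivity)
    _ = C * ‖w - z‖ := by field_simp
    _ = C * ‖z - w‖ := by rw [norm_sub_rev]
lemma backward_bloch {n : ℕ} (f : Cn n → ℂ) (hf2 : ContDiffOn ℝ 2 f (ball 0 1)) {C : ℝ}
    (hC0 : 0 ≤ C)
    (hC : ∀ z ∈ ball (0:Cn n) 1, ∀ w ∈ ball (0:Cn n) 1, z ≠ w → weightedLip n f z w ≤ C)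
    {z : Cn n} (hz : z ∈ ball (0:Cn n) 1) : hbExpr n f z ≤ 2 * C := by
  have hzb := hz
  rw [mem_ball_zero_iff] at hz
  set a := 1 - ‖z‖^2 with hadef
  have ha : 0 < a := by rw [hadef]; nlinarith [norm_nonneg z]
  have hsa0 : 0 < Real.sqrt a := Real.sqrt_pos.mpr ha
  have hKv : ∀ v : Cn n, ‖fderiv ℝ f z v‖ ≤ (C/a) * ‖v‖ := by
    intro v
    rcases eq_or_ne v 0 with rfl | hv
    · simp
    have hv0 : 0 < ‖v‖ := norm_pos_iff.mpr hv
    have hfd : DifferentiableAt ℝ f z :=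
      (hf2.differentiableOn (by norm_num)).differentiableAt (isOpen_ball.mem_nhds hzb)
    have hd : HasDerivAt (fun t : ℝ => f (z + t • v)) (fderiv ℝ f z v) 0 := by
      have hγd : HasDerivAt (fun t : ℝ => z + t • v) v 0 := by
        simpa using ((hasDerivAt_id (0:ℝ)).smul_const v).const_add z
      have h0 : z + (0:ℝ) • v = z := by simp
      have hfd' : DifferentiableAt ℝ f (z + (0:ℝ) • v) := by rwa [h0]
      have := hfd'.hasFDerivAt.comp_hasDerivAt 0 hγd
      rwa [h0] at this
    rw [hasDerivAt_iff_tendsto_slope] at hd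
    have h1 : Filter.Tendsto (fun t : ℝ => ‖slope (fun t : ℝ => f (z + t • v)) 0 t‖)
        (𝓝[≠] (0:ℝ)) (𝓝 ‖fderiv ℝ f z v‖) := (continuous_norm.tendsto _).comp hd
    have hgc : ContinuousAt
        (fun t : ℝ => C * ‖v‖ / (Real.sqrt a * Real.sqrt (1 - ‖z + t • v‖^2))) 0 := by
      apply ContinuousAt.div continuousAt_const
      · apply ContinuousAt.mul continuousAt_const
        apply Real.continuous_sqrt.continuousAt.comp
        fun_prop
      · have h0 : z + (0:ℝ) • v = z := by simp
        simp only [h0]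
        rw [← hadef, Real.mul_self_sqrt ha.le]
        exact ne_of_gt ha
    have h2 : Filter.Tendsto
        (fun t : ℝ => C * ‖v‖ / (Real.sqrt a * Real.sqrt (1 - ‖z + t • v‖^2)))
        (𝓝[≠] (0:ℝ)) (𝓝 (C * ‖v‖ / a)) := by
      have := hgc.tendsto.mono_left (nhdsWithin_le_nhds : 𝓝[≠] (0:ℝ) ≤ 𝓝 0)
      have h0 : z + (0:ℝ) • v = z := by simp
      simp only [h0, ← hadef, Real.mul_self_sqrt ha.le] at this
      exact this
    have hballev : ∀ᶠ t in 𝓝 (0:ℝ), ‖z + t • v‖ < 1 := by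
      have hc : Filter.Tendsto (fun t : ℝ => ‖z + t • v‖) (𝓝 0) (𝓝 ‖z + (0:ℝ) • v‖) := by
        apply Continuous.tendsto; fun_prop
      have h0 : z + (0:ℝ) • v = z := by simp
      rw [h0] at hc
      exact hc.eventually_lt_const hz
    have hle : ∀ᶠ t in 𝓝[≠] (0:ℝ),
        ‖slope (fun t : ℝ => f (z + t • v)) 0 t‖ ≤
          C * ‖v‖ / (Real.sqrt a * Real.sqrt (1 - ‖z + t • v‖^2)) := by
      filter_upwards [hballev.filter_mono nhdsWithin_le_nhds, self_mem_nhdsWithin]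
        with t hball (hne : t ≠ (0:ℝ))
      have htv : t • v ≠ 0 := smul_ne_zero hne hv
      have hne' : z + t • v ≠ z := by
        intro h
        apply htv
        have := congrArg (fun x => x - z) h
        simpa using this
      have hmem' : z + t • v ∈ ball (0:Cn n) 1 := mem_ball_zero_iff.mpr hball
      have hwl := hC (z + t • v) hmem' z hzb hne'
      rw [weightedLip] at hwl
      have hb' : 0 < 1 - ‖z + t • v‖^2 := by nlinarith [norm_nonneg (z + t • v)]
      have hsb' : 0 < Real.sqrt (1 - ‖z + t • v‖^2) := Real.sqrt_pos.mpr hb'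
      have hdist : ‖(z + t • v) - z‖ = |t| * ‖v‖ := by
        rw [show (z + t • v) - z = t • v by abel, norm_smul, Real.norm_eq_abs]
      have htpos : 0 < |t| := abs_pos.mpr hne
      rw [hdist, div_le_iff₀ (by positivity)] at hwl
      have hslope : ‖slope (fun t : ℝ => f (z + t • v)) 0 t‖ =
          ‖f (z + t • v) - f z‖ / |t| := by
        rw [slope_def_module]
        rw [norm_smul, sub_zero, norm_inv, Real.norm_eq_abs]
        have h0 : z + (0:ℝ) • v = z := by simp
        rw [h0, inv_mul_eq_div]
      rw [hslope, div_le_div_iff₀ htpos (by positivity)]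
      have habs : ‖f (z + t • v) - f z‖ = ‖f (z + t • v) - f z‖ := rfl
      rw [habs, ← hadef] at hwl
      nlinarith [hwl]
    have hlim := le_of_tendsto_of_tendsto h1 h2 hle
    calc ‖fderiv ℝ f z v‖ ≤ C * ‖v‖ / a := hlim
      _ = (C/a) * ‖v‖ := by ring
  have hsum := euclNorm_add_le_of_fderiv_le f z (C/a) (div_nonneg hC0 ha.le) hKv
  rw [hbExpr, ← hadef]
  calc a * (euclNorm n (wdz n f z) + euclNorm n (wdzbar n f z))
      ≤ a * (2 * (C/a)) := mul_le_mul_of_nonneg_left hsum ha.le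
    _ = 2 * C := by field_simp

/-- An `h`-harmonic `f : Bⁿ → ℂ` has finite Bloch norm if and only if its
weighted Lipschitz function is bounded over pairs of distinct points of the ball. -/
theorem hbNorm_finite_iff_weightedLip_bounded (n : ℕ) (hn : 1 ≤ n) (f : Cn n → ℂ)
    (hf : IsHHarmonic n f) :
    (∃ C : ℝ, ∀ z ∈ ball (0 : Cn n) 1, hbExpr n f z ≤ C) ↔
      (∃ C : ℝ, ∀ z ∈ ball (0 : Cn n) 1, ∀ w ∈ ball (0 : Cn n) 1,
        z ≠ w → weightedLip n f z w ≤ C) := by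
  obtain ⟨hf2, -⟩ := hf
  constructor
  · rintro ⟨C, hC⟩
    exact ⟨C, fun z hz w hw hzw => forward_lip f hf2 hC hz hw hzw⟩
  · rintro ⟨C, hC⟩
    have hC0 : 0 ≤ C := by
      set p : Cn n := EuclideanSpace.single (⟨0, hn⟩ : Fin n) ((1:ℂ)/2) with hp
      have hpb : p ∈ ball (0:Cn n) 1 := by
        rw [mem_ball_zero_iff, hp, EuclideanSpace.norm_single]
        norm_num
      have h0b : (0:Cn n) ∈ ball (0:Cn n) 1 := by
        rw [mem_ball_zero_iff]; simp
      have hne : (0:Cn n) ≠ p := by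
        intro h
        have := congrFun (congrArg (fun (x : Cn n) k => x k) h) ⟨0, hn⟩
        rw [hp] at this
        simp [EuclideanSpace.single_apply] at this
      refine le_trans ?_ (hC 0 h0b p hpb hne)
      rw [weightedLip]
      positivity
    exact ⟨2 * C, fun z hz => backward_bloch f hf2 hC0 hC hz⟩
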